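/- Any Euclidean motion invariant linear partial differential operator of the second order on ℝⁿ (with continuous coefficients and not all second-order coefficients vanishing) is of the form L = αΔ + β for some α ∈ ℂ\{0} and β ∈ ℂ, where Δ is the Laplacian. -/

import Mathlib

open scoped BigOperators

noncomputable section

/-- Partial derivative in the `i`-th coordinate direction. -/
def pd {d : ℕ} (i : Fin d) (u : (Fin d → ℝ) → ℂ) : (Fin d → ℝ) → ℂ :=
  fun x => fderiv ℝ u x (Pi.single i 1)

/-- Iterated mixed partial derivative `∂^α` for a multi-index `α`. -/
def pdMulti {d : ℕ} (α : Fin d → ℕ) (u : (Fin d → ℝ) → ℂ) : (Fin d → ℝ) → ℂ :=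
  (List.finRange d).foldr (fun i v => (pd i)^[α i] v) u

/-- The finite set of multi-indices (on `d` variables) of total degree at most `m`. -/
def mIdx (d m : ℕ) : Finset (Fin d → ℕ) :=
  (Fintype.piFinset fun _ : Fin d => Finset.range (m + 1)).filter fun α => (∑ i, α i) ≤ m

/-- The linear partial differential operator `L = ∑_{|α| ≤ m} a_α ∂^α`. -/
def opApply {d : ℕ} (m : ℕ) (a : (Fin d → ℕ) → (Fin d → ℝ) → ℂ)
    (u : (Fin d → ℝ) → ℂ) : (Fin d → ℝ) → ℂ :=
  fun x => ∑ α ∈ mIdx d m, a α x * pdMulti α u x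

/-- Smooth (`C^∞`) functions. -/
def SmoothFn {d : ℕ} (u : (Fin d → ℝ) → ℂ) : Prop := ContDiff ℝ (⊤ : ℕ∞) u

/-- Membership in the orthogonal group `O(n)`:  `ᵗR R = I`. -/
def IsOrth {n : ℕ} (R : Matrix (Fin n) (Fin n) ℝ) : Prop :=
  R.transpose * R = 1

/-- The Laplacian `Δ = ∂₁² + ⋯ + ∂ₙ²` on `ℝⁿ`. -/
def lap {n : ℕ} (u : (Fin n → ℝ) → ℂ) : (Fin n → ℝ) → ℂ :=
  fun x => ∑ i : Fin n, pd i (pd i u) x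

/-- `L` is translation invariant: `T_y^* L f = L T_y^* f`. -/
def TransInvE {n : ℕ} (m : ℕ) (a : (Fin n → ℕ) → (Fin n → ℝ) → ℂ) : Prop :=
  ∀ y : Fin n → ℝ, ∀ f : (Fin n → ℝ) → ℂ, SmoothFn f →
    ∀ x, opApply m a f (x - y) = opApply m a (fun z => f (z - y)) x

/-- `L` is rotation invariant: `R^* L f = L R^* f` for all `R ∈ O(n)`. -/
def RotInvE {n : ℕ} (m : ℕ) (a : (Fin n → ℕ) → (Fin n → ℝ) → ℂ) : Prop :=
  ∀ R : Matrix (Fin n) (Fin n) ℝ, IsOrth R →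
    ∀ f : (Fin n → ℝ) → ℂ, SmoothFn f →
      ∀ x, opApply m a f (R.mulVec x) = opApply m a (fun z => f (R.mulVec z)) x

def lfun {n : ℕ} (ξ : Fin n → ℂ) : (Fin n → ℝ) →L[ℝ] ℂ :=
  ∑ j : Fin n, ξ j • (Complex.ofRealCLM.comp (ContinuousLinearMap.proj j))

lemma lfun_apply {n : ℕ} (ξ : Fin n → ℂ) (x : Fin n → ℝ) :
    lfun ξ x = ∑ j, ξ j * (x j : ℂ) := by
  simp [lfun, ContinuousLinearMap.sum_apply, mul_comm]

def expF {n : ℕ} (ξ : Fin n → ℂ) : (Fin n → ℝ) → ℂ :=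
  fun x => Complex.exp (∑ j, ξ j * (x j : ℂ))

lemma expF_eq {n : ℕ} (ξ : Fin n → ℂ) : expF ξ = Complex.exp ∘ (lfun ξ) := by
  funext x; simp [expF, lfun_apply]

lemma smooth_expF {n : ℕ} (ξ : Fin n → ℂ) : SmoothFn (expF ξ) := by
  rw [SmoothFn, expF_eq]
  exact (Complex.contDiff_exp.restrict_scalars (𝕜' := ℂ) ℝ).comp (lfun ξ).contDiff

lemma hasFDerivAt_expF {n : ℕ} (ξ : Fin n → ℂ) (x : Fin n → ℝ) :
    HasFDerivAt (expF ξ) (expF ξ x • lfun ξ) x := by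
  rw [expF_eq]
  have h := (Complex.hasDerivAt_exp (lfun ξ x)).comp_hasFDerivAt x (lfun ξ).hasFDerivAt
  simpa [expF_eq] using h

lemma pd_const_mul_expF {n : ℕ} (ξ : Fin n → ℂ) (c : ℂ) (i : Fin n) :
    pd i (fun x => c * expF ξ x) = fun x => (c * ξ i) * expF ξ x := by
  funext x
  have h := (hasFDerivAt_expF ξ x).const_mul c
  rw [pd, h.fderiv]
  simp [lfun_apply, Finset.mul_sum]
  rw [Finset.sum_eq_single i]
  · simp [Pi.single_eq_same]; ring
  · intro b _ hb; simp [Pi.single_eq_of_ne hb]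
  · simp

lemma iter_pd_const_mul_expF {n : ℕ} (ξ : Fin n → ℂ) (i : Fin n) (k : ℕ) (c : ℂ) :
    (pd i)^[k] (fun x => c * expF ξ x) = fun x => (c * ξ i ^ k) * expF ξ x := by
  induction k generalizing c with
  | zero => simp
  | succ m ih =>
    rw [Function.iterate_succ_apply, pd_const_mul_expF, ih]
    funext x; ring

lemma foldr_pd_expF {n : ℕ} (ξ : Fin n → ℂ) (α : Fin n → ℕ) (l : List (Fin n)) (c : ℂ) :
    l.foldr (fun i v => (pd i)^[α i] v) (fun x => c * expF ξ x)
      = fun x => (c * (l.map (fun i => ξ i ^ α i)).prod) * expF ξ x := by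
  induction l generalizing c with
  | nil => simp
  | cons j t ih =>
    simp only [List.foldr_cons, ih, List.map_cons, List.prod_cons]
    rw [iter_pd_const_mul_expF]
    funext x; ring

lemma pdMulti_const_mul_expF {n : ℕ} (ξ : Fin n → ℂ) (α : Fin n → ℕ) (c : ℂ) :
    pdMulti α (fun x => c * expF ξ x) = fun x => (c * ∏ i, ξ i ^ α i) * expF ξ x := by
  rw [pdMulti, foldr_pd_expF, Fin.prod_univ_def]

lemma pdMulti_expF {n : ℕ} (ξ : Fin n → ℂ) (α : Fin n → ℕ) :
    pdMulti α (expF ξ) = fun x => (∏ i, ξ i ^ α i) * expF ξ x := by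
  have h : expF ξ = fun x => (1:ℂ) * expF ξ x := by funext x; ring
  rw [h, pdMulti_const_mul_expF]
  funext x; ring

lemma foldr_id {d : ℕ} (i : Fin d) (k : ℕ) (u : (Fin d → ℝ) → ℂ) (l : List (Fin d))
    (hl : i ∉ l) :
    l.foldr (fun j v => (pd j)^[(Pi.single i k : Fin d → ℕ) j] v) u = u := by
  induction l with
  | nil => rfl
  | cons j t ih =>
    have hji : j ≠ i := fun h => hl (h ▸ (List.mem_cons_self : j ∈ j :: t))
    have h0 : (Pi.single i k : Fin d → ℕ) j = 0 := by simp [hji]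
    simp only [List.foldr_cons, ih (fun h => hl (List.mem_cons_of_mem j h)), h0,
      Function.iterate_zero, id]

lemma foldr_single {d : ℕ} (i : Fin d) (k : ℕ) (u : (Fin d → ℝ) → ℂ) (l : List (Fin d))
    (hnd : l.Nodup) (hmem : i ∈ l) :
    l.foldr (fun j v => (pd j)^[(Pi.single i k : Fin d → ℕ) j] v) u = (pd i)^[k] u := by
  induction l with
  | nil => simp at hmem
  | cons j t ih =>
    rcases List.mem_cons.mp hmem with rfl | h
    · have hnt : i ∉ t := (List.nodup_cons.mp hnd).1
      simp only [List.foldr_cons, foldr_id i k u t hnt, Pi.single_eq_same]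
    · have hji : j ≠ i := by
        rintro rfl; exact (List.nodup_cons.mp hnd).1 h
      have h0 : (Pi.single i k : Fin d → ℕ) j = 0 := by simp [hji]
      simp only [List.foldr_cons, ih (List.nodup_cons.mp hnd).2 h, h0,
        Function.iterate_zero, id]

lemma foldr_zero {d : ℕ} (u : (Fin d → ℝ) → ℂ) (l : List (Fin d)) :
    l.foldr (fun j v => (pd j)^[(0 : Fin d → ℕ) j] v) u = u := by
  induction l with
  | nil => rfl
  | cons j t ih =>
    rw [List.foldr_cons]
    have h0 : (0 : Fin d → ℕ) j = 0 := rfl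
    rw [h0, Function.iterate_zero, id_eq, ih]

lemma pdMulti_zero {d : ℕ} (u : (Fin d → ℝ) → ℂ) : pdMulti 0 u = u :=
  foldr_zero u _

lemma pdMulti_single {d : ℕ} (i : Fin d) (k : ℕ) (u : (Fin d → ℝ) → ℂ) :
    pdMulti (Pi.single i k) u = (pd i)^[k] u :=
  foldr_single i k u _ (List.nodup_finRange d) (List.mem_finRange i)

lemma mem_mIdx {d m : ℕ} (α : Fin d → ℕ) : α ∈ mIdx d m ↔ (∑ i, α i) ≤ m := by
  constructor
  · intro h; exact (Finset.mem_filter.mp h).2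
  · intro h
    refine Finset.mem_filter.mpr ⟨Fintype.mem_piFinset.mpr fun i => ?_, h⟩
    refine Finset.mem_range.mpr (Nat.lt_succ_of_le (le_trans ?_ h))
    exact Finset.single_le_sum (fun j _ => Nat.zero_le _) (Finset.mem_univ i)

lemma coeff_ext {n : ℕ} (c d : (Fin n → ℕ) → ℂ)
    (h : ∀ ξ : Fin n → ℂ, ∑ α ∈ mIdx n 2, c α * ∏ i, ξ i ^ α i
        = ∑ α ∈ mIdx n 2, d α * ∏ i, ξ i ^ α i) :
    ∀ α ∈ mIdx n 2, c α = d α := by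
  classical
  set P : ((Fin n → ℕ) → ℂ) → MvPolynomial (Fin n) ℂ := fun e =>
    ∑ α ∈ mIdx n 2, MvPolynomial.monomial (Finsupp.equivFunOnFinite.symm α) (e α) with hP
  have heval : ∀ e ξ, MvPolynomial.eval ξ (P e) = ∑ α ∈ mIdx n 2, e α * ∏ i, ξ i ^ α i := by
    intro e ξ
    rw [hP, map_sum]
    refine Finset.sum_congr rfl fun α _ => ?_
    rw [MvPolynomial.eval_monomial]
    congr 1
    rw [Finsupp.prod_fintype _ _ (fun i => pow_zero (ξ i))]
    rfl
  have hPeq : P c = P d := MvPolynomial.funext fun ξ => by rw [heval, heval]; exact h ξ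
  intro α hα
  have hc : ∀ e, (P e).coeff (Finsupp.equivFunOnFinite.symm α) = e α := by
    intro e
    rw [hP]
    simp only [MvPolynomial.coeff_sum, MvPolynomial.coeff_monomial]
    rw [Finset.sum_eq_single_of_mem α hα]
    · simp
    · intro β _ hβα
      rw [if_neg]
      exact fun hh => hβα (Finsupp.equivFunOnFinite.symm.injective hh)
  rw [← hc c, ← hc d, hPeq]

lemma classify2 {n : ℕ} (α : Fin n → ℕ) (hs : ∑ i, α i = 2) (he : ∀ i, ¬ Odd (α i)) :
    ∃ i, α = Pi.single i 2 := by
  have hne : ∃ i, α i ≠ 0 := by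
    by_contra hc
    push_neg at hc
    simp only [hc, Finset.sum_const_zero] at hs
    exact two_ne_zero hs.symm
  obtain ⟨i, hi⟩ := hne
  have hle : α i ≤ 2 := hs ▸ Finset.single_le_sum (fun j _ => Nat.zero_le _) (Finset.mem_univ i)
  have h2 : α i = 2 := by
    rcases Nat.not_odd_iff_even.mp (he i) with ⟨r, hr⟩
    omega
  refine ⟨i, funext fun j => ?_⟩
  rcases eq_or_ne j i with rfl | hj
  · rw [Pi.single_eq_same, h2]
  · rw [Pi.single_eq_of_ne hj]
    have := Finset.add_sum_erase Finset.univ α (Finset.mem_univ i)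
    have hz : ∑ k ∈ Finset.univ.erase i, α k = 0 := by omega
    have := Finset.sum_eq_zero_iff.mp hz j (Finset.mem_erase.mpr ⟨hj, Finset.mem_univ j⟩)
    exact this

lemma opApply_cexpF {n : ℕ} (a : (Fin n → ℕ) → (Fin n → ℝ) → ℂ) (ξ : Fin n → ℂ)
    (C : ℂ) (x : Fin n → ℝ) :
    opApply 2 a (fun z => C * expF ξ z) x
      = (∑ α ∈ mIdx n 2, a α x * ∏ i, ξ i ^ α i) * (C * expF ξ x) := by
  simp only [opApply, pdMulti_const_mul_expF]
  rw [Finset.sum_mul]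
  exact Finset.sum_congr rfl fun α _ => by ring

lemma opApply_expF {n : ℕ} (a : (Fin n → ℕ) → (Fin n → ℝ) → ℂ) (ξ : Fin n → ℂ)
    (x : Fin n → ℝ) :
    opApply 2 a (expF ξ) x
      = (∑ α ∈ mIdx n 2, a α x * ∏ i, ξ i ^ α i) * expF ξ x := by
  have h : expF ξ = fun z => (1:ℂ) * expF ξ z := by funext z; ring
  rw [h, opApply_cexpF]

lemma expF_zero {n : ℕ} (ξ : Fin n → ℂ) : expF ξ 0 = 1 := by
  simp [expF]

lemma smooth_cexpF {n : ℕ} (ξ : Fin n → ℂ) (C : ℂ) :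
    SmoothFn (fun z => C * expF ξ z) :=
  ContDiff.mul contDiff_const (smooth_expF ξ)

lemma expF_ne_zero {n : ℕ} (ξ : Fin n → ℂ) (x : Fin n → ℝ) : expF ξ x ≠ 0 :=
  Complex.exp_ne_zero _

lemma expF_sub {n : ℕ} (ξ : Fin n → ℂ) (y : Fin n → ℝ) :
    (fun z => expF ξ (z - y)) = fun z => Complex.exp (-∑ j, ξ j * (y j : ℂ)) * expF ξ z := by
  funext z
  rw [expF, expF, ← Complex.exp_add]
  congr 1
  push_cast [Pi.sub_apply]
  rw [← Finset.sum_neg_distrib, ← Finset.sum_add_distrib]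
  exact Finset.sum_congr rfl fun j _ => by ring

lemma coeff_const {n : ℕ} (a : (Fin n → ℕ) → (Fin n → ℝ) → ℂ)
    (hT : ∀ y : Fin n → ℝ, ∀ f : (Fin n → ℝ) → ℂ, SmoothFn f →
      ∀ x, opApply 2 a f (x - y) = opApply 2 a (fun z => f (z - y)) x) :
    ∀ α ∈ mIdx n 2, ∀ x, a α x = a α 0 := by
  have key : ∀ x y : Fin n → ℝ, ∀ α ∈ mIdx n 2, a α (x - y) = a α x := by
    intro x y
    refine coeff_ext _ _ fun ξ => ?_
    have h := hT y (expF ξ) (smooth_expF ξ) x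
    rw [opApply_expF, expF_sub, opApply_cexpF] at h
    have hne : Complex.exp (-∑ j, ξ j * (y j : ℂ)) * expF ξ x ≠ 0 :=
      mul_ne_zero (Complex.exp_ne_zero _) (expF_ne_zero ξ x)
    have hrw : expF ξ (x - y) = Complex.exp (-∑ j, ξ j * (y j : ℂ)) * expF ξ x :=
      congrFun (expF_sub ξ y) x
    rw [hrw] at h
    exact mul_right_cancel₀ hne h
  intro α hα x
  have := key x x α hα
  rw [sub_self] at this
  exact this.symm

lemma rot_symbol {n : ℕ} (a : (Fin n → ℕ) → (Fin n → ℝ) → ℂ)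
    (hR : ∀ R : Matrix (Fin n) (Fin n) ℝ, IsOrth R →
      ∀ f : (Fin n → ℝ) → ℂ, SmoothFn f →
        ∀ x, opApply 2 a f (R.mulVec x) = opApply 2 a (fun z => f (R.mulVec z)) x)
    (R : Matrix (Fin n) (Fin n) ℝ) (hO : IsOrth R) (ξ ξ' : Fin n → ℂ)
    (hfe : ∀ z, expF ξ (R.mulVec z) = expF ξ' z) :
    ∑ α ∈ mIdx n 2, a α 0 * ∏ i, ξ i ^ α i = ∑ α ∈ mIdx n 2, a α 0 * ∏ i, ξ' i ^ α i := by
  have h := hR R hO (expF ξ) (smooth_expF ξ) 0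
  rw [Matrix.mulVec_zero, opApply_expF, expF_zero, mul_one] at h
  have h2 : (fun z => expF ξ (R.mulVec z)) = expF ξ' := funext hfe
  rw [h2, opApply_expF, expF_zero, mul_one] at h
  exact h

lemma flip_kill {n : ℕ} (a : (Fin n → ℕ) → (Fin n → ℝ) → ℂ)
    (hR : ∀ R : Matrix (Fin n) (Fin n) ℝ, IsOrth R →
      ∀ f : (Fin n → ℝ) → ℂ, SmoothFn f →
        ∀ x, opApply 2 a f (R.mulVec x) = opApply 2 a (fun z => f (R.mulVec z)) x)
    (i : Fin n) (α : Fin n → ℕ) (hα : α ∈ mIdx n 2) (hodd : Odd (α i)) :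
    a α 0 = 0 := by
  classical
  set R : Matrix (Fin n) (Fin n) ℝ := Matrix.diagonal (fun j => if j = i then (-1:ℝ) else 1)
    with hRdef
  have hO : IsOrth R := by
    rw [IsOrth, hRdef, Matrix.diagonal_transpose, Matrix.diagonal_mul_diagonal]
    have e : (fun j => (if j = i then (-1:ℝ) else 1) * (if j = i then (-1:ℝ) else 1))
        = fun _ => (1:ℝ) := by
      funext j; by_cases h : j = i <;> simp [h]
    rw [e, Matrix.diagonal_one]
  have key : ∀ β ∈ mIdx n 2,
      a β 0 = (fun γ => (-1:ℂ) ^ (γ i) * a γ 0) β := by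
    refine coeff_ext _ _ fun ξ => ?_
    have hfe : ∀ z, expF ξ (R.mulVec z)
        = expF (fun j => if j = i then -ξ j else ξ j) z := by
      intro z
      rw [expF, expF]
      congr 1
      refine Finset.sum_congr rfl fun j _ => ?_
      have hmv : (R.mulVec z) j = (if j = i then (-1:ℝ) else 1) * z j := by
        rw [hRdef, Matrix.mulVec_diagonal]
      rw [hmv]
      by_cases h : j = i <;> simp [h] <;> ring
    have h := rot_symbol a hR R hO ξ _ hfe
    rw [h]
    refine Finset.sum_congr rfl fun β _ => ?_
    have hprod : (∏ j, (if j = i then -ξ j else ξ j) ^ β j)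
        = (-1:ℂ) ^ (β i) * ∏ j, ξ j ^ β j := by
      have hsplit : ∀ j, (if j = i then -ξ j else ξ j) = (if j = i then (-1:ℂ) else 1) * ξ j := by
        intro j; by_cases h : j = i <;> simp [h]
      simp only [hsplit, mul_pow]
      rw [Finset.prod_mul_distrib]
      congr 1
      rw [Finset.prod_eq_single i]
      · simp
      · intro b _ hb; simp [hb]
      · simp
    rw [hprod]
    ring
  have h := key α hα
  simp only at h
  have hneg : (-1:ℂ) ^ (α i) = -1 := Odd.neg_one_pow hodd
  rw [hneg] at h
  have : (2:ℂ) * a α 0 = 0 := by linear_combination h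
  simpa using this

lemma swap_eq {n : ℕ} (a : (Fin n → ℕ) → (Fin n → ℝ) → ℂ)
    (hR : ∀ R : Matrix (Fin n) (Fin n) ℝ, IsOrth R →
      ∀ f : (Fin n → ℝ) → ℂ, SmoothFn f →
        ∀ x, opApply 2 a f (R.mulVec x) = opApply 2 a (fun z => f (R.mulVec z)) x)
    (i j : Fin n) :
    a (Pi.single i 2) 0 = a (Pi.single j 2) 0 := by
  classical
  rcases eq_or_ne i j with rfl | hij
  · rfl
  set σ := Equiv.swap i j with hσ
  set R : Matrix (Fin n) (Fin n) ℝ := fun p q => if q = σ p then 1 else 0 with hRdef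
  have hmv : ∀ (z : Fin n → ℝ) (p : Fin n), (R.mulVec z) p = z (σ p) := by
    intro z p
    simp only [Matrix.mulVec, dotProduct, hRdef]
    rw [Finset.sum_eq_single (σ p)]
    · simp
    · intro b _ hb; simp [hb]
    · simp
  have hinv : ∀ p, σ (σ p) = p := fun p => Equiv.swap_apply_self i j p
  have hO : IsOrth R := by
    rw [IsOrth]
    ext p q
    rw [Matrix.mul_apply]
    simp only [Matrix.transpose_apply]
    simp only [hRdef]
    rw [Finset.sum_eq_single (σ p)]
    · rw [hinv p]
      simp [Matrix.one_apply, eq_comm]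
    · intro b _ hb
      have : p ≠ σ b := by
        intro h
        apply hb
        rw [h, hinv]
      simp [this]
    · simp
  have key : ∀ β ∈ mIdx n 2, a β 0 = (fun γ => a (γ ∘ σ) 0) β := by
    refine coeff_ext _ _ fun ξ => ?_
    have hfe : ∀ z, expF ξ (R.mulVec z) = expF (ξ ∘ σ) z := by
      intro z
      rw [expF, expF]
      congr 1
      rw [← Equiv.sum_comp σ (fun p => (ξ ∘ σ) p * ((z p : ℝ) : ℂ))]
      refine Finset.sum_congr rfl fun p _ => ?_
      simp only [hmv, Function.comp_apply, hinv]
    have h := rot_symbol a hR R hO ξ _ hfe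
    rw [h]
    have hprod : ∀ β : Fin n → ℕ, (∏ k, (ξ ∘ σ) k ^ β k) = ∏ k, ξ k ^ (β ∘ σ) k := by
      intro β
      rw [← Equiv.prod_comp σ (fun k => ξ k ^ (β ∘ σ) k)]
      refine Finset.prod_congr rfl fun k _ => ?_
      simp only [Function.comp_apply, hinv]
    simp only [hprod]
    refine Finset.sum_nbij' (fun β => β ∘ σ) (fun β => β ∘ σ) ?_ ?_ ?_ ?_ ?_
    · intro β hβ
      rw [mem_mIdx] at hβ ⊢
      simp only [Function.comp_apply]
      rwa [Equiv.sum_comp σ β]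
    · intro β hβ
      rw [mem_mIdx] at hβ ⊢
      simp only [Function.comp_apply]
      rwa [Equiv.sum_comp σ β]
    · intro β _
      funext k
      simp [hinv]
    · intro β _
      funext k
      simp [hinv]
    · intro β _
      have hb : (fun γ : Fin n → ℕ => γ ∘ σ) β ∘ σ = β := by funext k; simp [hinv]
      rw [hb]
  have hs : Pi.single j 2 ∈ mIdx n 2 := by
    rw [mem_mIdx, Finset.sum_pi_single']
    simp
  have h := key (Pi.single j 2) hs
  simp only at h
  have hcomp : (Pi.single j 2 : Fin n → ℕ) ∘ σ = Pi.single i 2 := by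
    funext k
    simp only [Function.comp_apply]
    rcases eq_or_ne k i with rfl | hki
    · rw [hσ, Equiv.swap_apply_left, Pi.single_eq_same, Pi.single_eq_same]
    · rw [Pi.single_eq_of_ne hki]
      have : σ k ≠ j := by
        intro hkj
        apply hki
        have := congrArg σ hkj
        rw [hinv] at this
        rw [this, hσ, Equiv.swap_apply_right]
      rw [Pi.single_eq_of_ne this]
  rw [hcomp] at h
  exact h.symm

/-- Corollary 3: Any Euclidean motion invariant linear partial
differential operator of the second order on `ℝⁿ` is of the form `L = α Δ + β` with
`α ≠ 0`. -/
theorem second_order_euclidean_invariant (n : ℕ)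
    (a : (Fin n → ℕ) → (Fin n → ℝ) → ℂ)
    (hcont : ∀ α ∈ mIdx n 2, Continuous (a α))
    (htop : ∃ α ∈ mIdx n 2, (∑ i, α i) = 2 ∧ ∃ x, a α x ≠ 0)
    (hT : TransInvE 2 a) (hR : RotInvE 2 a) :
    ∃ α c : ℂ, α ≠ 0 ∧
      ∀ f : (Fin n → ℝ) → ℂ, SmoothFn f → ∀ x,
        opApply 2 a f x = α * lap f x + c * f x := by
  classical
  obtain ⟨α0, hα0, hsum0, x0, hx0⟩ := htop
  have hT' : ∀ y : Fin n → ℝ, ∀ f : (Fin n → ℝ) → ℂ, SmoothFn f →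
      ∀ x, opApply 2 a f (x - y) = opApply 2 a (fun z => f (z - y)) x := hT
  have hR' : ∀ R : Matrix (Fin n) (Fin n) ℝ, IsOrth R →
      ∀ f : (Fin n → ℝ) → ℂ, SmoothFn f →
        ∀ x, opApply 2 a f (R.mulVec x) = opApply 2 a (fun z => f (R.mulVec z)) x := hR
  have hconst : ∀ α ∈ mIdx n 2, ∀ x, a α x = a α 0 := coeff_const a hT'
  have hc0 : a α0 0 ≠ 0 := by
    rw [← hconst α0 hα0 x0]; exact hx0
  have heven : ∀ i, ¬ Odd (α0 i) := by
    intro i hodd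
    exact hc0 (flip_kill a hR' i α0 hα0 hodd)
  obtain ⟨i0, hi0⟩ := classify2 α0 hsum0 heven
  set A : ℂ := a (Pi.single i0 2) 0 with hAdef
  set C : ℂ := a 0 0 with hCdef
  have hA : A ≠ 0 := by rw [hAdef, ← hi0]; exact hc0
  refine ⟨A, C, hA, ?_⟩
  intro f hf x
  set S : Finset (Fin n → ℕ) :=
    insert 0 (Finset.image (fun i => (Pi.single i 2 : Fin n → ℕ)) Finset.univ) with hSdef
  have hsingle_mem : ∀ i : Fin n, (Pi.single i 2 : Fin n → ℕ) ∈ mIdx n 2 := by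
    intro i
    rw [mem_mIdx, Finset.sum_pi_single']
    simp
  have hsub : S ⊆ mIdx n 2 := by
    intro β hβ
    rw [hSdef] at hβ
    rcases Finset.mem_insert.mp hβ with rfl | hβ
    · rw [mem_mIdx]; simp
    · obtain ⟨i, _, rfl⟩ := Finset.mem_image.mp hβ
      exact hsingle_mem i
  set g : (Fin n → ℕ) → ℂ := fun α => a α 0 * pdMulti α f x with hgdef
  have hzero : ∀ β ∈ mIdx n 2, β ∉ S → g β = 0 := by
    intro β hβ hβS
    have : a β 0 = 0 := by
      by_cases hodd : ∃ i, Odd (β i)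
      · obtain ⟨i, hi⟩ := hodd
        exact flip_kill a hR' i β hβ hi
      · push_neg at hodd
        exfalso
        have hle : ∑ i, β i ≤ 2 := (mem_mIdx β).mp hβ
        have hevensum : Even (∑ i, β i) :=
          Finset.even_sum _ fun i _ => Nat.not_odd_iff_even.mp (hodd i)
        obtain ⟨r, hr⟩ := hevensum
        have : ∑ i, β i = 0 ∨ ∑ i, β i = 2 := by omega
        rcases this with hs | hs
        · have hβ0 : β = 0 := by
            funext k
            exact Finset.sum_eq_zero_iff.mp hs k (Finset.mem_univ k)
          apply hβS
          rw [hSdef, hβ0]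
          exact Finset.mem_insert_self 0 _
        · obtain ⟨i, hi⟩ := classify2 β hs hodd
          apply hβS
          rw [hSdef, hi]
          exact Finset.mem_insert_of_mem (Finset.mem_image.mpr ⟨i, Finset.mem_univ i, rfl⟩)
    rw [hgdef]
    simp only [this, zero_mul]
  have hsum_eq : ∑ β ∈ S, g β = ∑ β ∈ mIdx n 2, g β :=
    Finset.sum_subset hsub hzero
  have hop : opApply 2 a f x = ∑ β ∈ mIdx n 2, g β := by
    rw [opApply, hgdef]
    exact Finset.sum_congr rfl fun β hβ => by rw [hconst β hβ x]
  have h0notin : (0 : Fin n → ℕ) ∉ Finset.image (fun i => (Pi.single i 2 : Fin n → ℕ)) Finset.univ := by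
    intro hmem
    obtain ⟨i, _, hi⟩ := Finset.mem_image.mp hmem
    have := congrFun hi i
    rw [Pi.single_eq_same] at this
    simp at this
  have hinj : ∀ i ∈ (Finset.univ : Finset (Fin n)), ∀ i' ∈ Finset.univ,
      (Pi.single i 2 : Fin n → ℕ) = Pi.single i' 2 → i = i' := by
    intro i _ i' _ h
    by_contra hne
    have := congrFun h i
    rw [Pi.single_eq_same, Pi.single_eq_of_ne hne] at this
    simp at this
  have hSsum : ∑ β ∈ S, g β = g 0 + ∑ i : Fin n, g (Pi.single i 2) := by
    rw [hSdef, Finset.sum_insert h0notin, Finset.sum_image hinj]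
  have hg0 : g 0 = C * f x := by
    rw [hgdef]
    simp only [pdMulti_zero]
    rfl
  have hgsingle : ∀ i : Fin n, g (Pi.single i 2) = A * pd i (pd i f) x := by
    intro i
    rw [hgdef]
    simp only []
    rw [swap_eq a hR' i i0, pdMulti_single]
    rfl
  rw [hop, ← hsum_eq, hSsum, hg0]
  have : ∑ i : Fin n, g (Pi.single i 2) = A * lap f x := by
    rw [lap]
    simp only [hgsingle]
    rw [Finset.mul_sum]
  rw [this]
  ring
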